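/- arXiv:1402.3830 — 2 statements merged into one kernel-verified Lean document; each statement's English description precedes it below -/
import Mathlib

section
/- The function x ↦ arctan(f(x)/(1 + f(x))) · (1/x), defined for 0 < x < 1, extends to a continuous and bounded function on [0,1) (with value 0 at x = 0); in particular it is integrable on (0,1). -/
/-- The real inverse hyperbolic tangent. -/
noncomputable def artanh (x : ℝ) : ℝ := (1/2) * Real.log ((1 + x) / (1 - x))

/-- `f(x) = (1/π)(artanh x − arctan x)`. -/
noncomputable def f (x : ℝ) : ℝ := (1 / Real.pi) * (artanh x - Real.arctan x)

open Real Set Filter Topology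

lemma f_zero : f 0 = 0 := by simp [f, _root_.artanh]

lemma my_arctan_le_self {t : ℝ} (ht : 0 ≤ t) : Real.arctan t ≤ t := by
  rcases eq_or_lt_of_le ht with h | h
  · simp [← h]
  · have h1 : 0 < Real.arctan t := by
      have := Real.arctan_strictMono h
      simpa using this
    have h2 := Real.arctan_lt_pi_div_two t
    have h3 := Real.lt_tan h1 h2
    rw [Real.tan_arctan] at h3
    exact h3.le

lemma hasDerivAt_artanh {x : ℝ} (h1 : -1 < x) (h2 : x < 1) :
    HasDerivAt _root_.artanh (1 / (1 - x^2)) x := by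
  have hx1 : (0:ℝ) < 1 + x := by linarith
  have hx2 : (0:ℝ) < 1 - x := by linarith
  have hd : HasDerivAt (fun y : ℝ => (1 + y) / (1 - y))
      ((1 * (1 - x) - (1 + x) * (-1)) / (1 - x) ^ 2) x :=
    ((hasDerivAt_id x).const_add 1).div ((hasDerivAt_id x).const_sub 1) hx2.ne'
  have hpos : (0:ℝ) < (1 + x) / (1 - x) := div_pos hx1 hx2
  have hlog := (hd.log hpos.ne').const_mul (1/2 : ℝ)
  have h3 : (1:ℝ) - x^2 ≠ 0 := by nlinarith
  refine hlog.congr_deriv ?_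
  field_simp
  ring

lemma f_nonneg {x : ℝ} (hx : x ∈ Set.Ico (0:ℝ) 1) : 0 ≤ f x := by
  set h : ℝ → ℝ := fun y => _root_.artanh y - Real.arctan y with hh
  have hderiv : ∀ y ∈ Set.Ico (0:ℝ) 1,
      HasDerivAt h (1 / (1 - y^2) - 1 / (1 + y^2)) y := fun y hy =>
    (hasDerivAt_artanh (by linarith [hy.1]) hy.2).sub (Real.hasDerivAt_arctan y)
  have hmono : MonotoneOn h (Set.Ico (0:ℝ) 1) := by
    apply monotoneOn_of_deriv_nonneg (convex_Ico _ _)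
    · intro y hy
      exact ((hderiv y hy).continuousAt).continuousWithinAt
    · intro y hy
      rw [interior_Ico] at hy
      exact ((hderiv y ⟨hy.1.le, hy.2⟩).differentiableAt).differentiableWithinAt
    · intro y hy
      rw [interior_Ico] at hy
      rw [((hderiv y ⟨hy.1.le, hy.2⟩).deriv)]
      have h1 : (0:ℝ) < 1 - y^2 := by nlinarith [hy.1, hy.2]
      have h2 : (0:ℝ) < 1 + y^2 := by positivity
      have : 1 / (1 + y^2) ≤ 1 / (1 - y^2) := by
        apply one_div_le_one_div_of_le h1; nlinarith
      linarith
  have h0 : h 0 ≤ h x := by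
    exact hmono ⟨le_refl 0, by norm_num⟩ hx hx.1
  have hh0 : h 0 = 0 := by simp [hh, _root_.artanh]
  have hpi : (0:ℝ) < 1 / Real.pi := by positivity
  have : 0 ≤ h x := hh0 ▸ h0
  exact mul_nonneg hpi.le this

lemma f_continuousOn : ContinuousOn f (Set.Ico (0:ℝ) 1) := by
  intro x hx
  have : HasDerivAt f ((1 / Real.pi) * (1 / (1 - x^2) - 1 / (1 + x^2))) x :=
    ((hasDerivAt_artanh (by linarith [hx.1]) hx.2).sub
      (Real.hasDerivAt_arctan x)).const_mul _
  exact this.continuousAt.continuousWithinAt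

lemma f_measurable : Measurable f := by
  have h1 : Measurable _root_.artanh := by
    apply Measurable.const_mul
    exact Real.measurable_log.comp ((measurable_const.add measurable_id).div
      (measurable_const.sub measurable_id))
  exact ((h1.sub Real.continuous_arctan.measurable).const_mul _)

lemma slope_tendsto : Filter.Tendsto (fun x : ℝ => f x * (1/x)) (𝓝[Set.Ioo (0:ℝ) 1] 0) (𝓝 0) := by
  have hd : HasDerivAt f 0 0 := by
    have : HasDerivAt f ((1 / Real.pi) * (1 / (1 - (0:ℝ)^2) - 1 / (1 + (0:ℝ)^2))) 0 :=
      ((hasDerivAt_artanh (by norm_num) (by norm_num)).sub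
        (Real.hasDerivAt_arctan 0)).const_mul _
    simpa using this
  have hs := hasDerivAt_iff_tendsto_slope.1 hd
  have heq : (fun x : ℝ => f x * (1/x)) = slope f 0 := by
    funext x
    simp [slope_def_field, f_zero, div_eq_mul_inv, one_div]
  rw [heq]
  exact hs.mono_left (nhdsWithin_mono 0 (fun y hy => ne_of_gt hy.1))

lemma key_bounds {x : ℝ} (hx : x ∈ Set.Ico (0:ℝ) 1) :
    0 ≤ Real.arctan (f x / (1 + f x)) * (1/x) ∧
    Real.arctan (f x / (1 + f x)) * (1/x) ≤ f x * (1/x) := by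
  have hf := f_nonneg hx
  have hden : (0:ℝ) < 1 + f x := by linarith
  have ht : 0 ≤ f x / (1 + f x) := div_nonneg hf hden.le
  have hx0 : (0:ℝ) ≤ 1/x := by
    rcases eq_or_lt_of_le hx.1 with h | h
    · simp [← h]
    · positivity
  constructor
  · exact mul_nonneg (by simpa using Real.arctan_strictMono.monotone ht) hx0
  · apply mul_le_mul_of_nonneg_right _ hx0
    calc Real.arctan (f x / (1 + f x)) ≤ f x / (1 + f x) := my_arctan_le_self ht
      _ ≤ f x := by
          rw [div_le_iff₀ hden]
          nlinarith

lemma main_continuousOn :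
    ContinuousOn (fun x : ℝ => Real.arctan (f x / (1 + f x)) * (1/x)) (Set.Ico (0:ℝ) 1) := by
  set F : ℝ → ℝ := fun x => Real.arctan (f x / (1 + f x)) * (1/x) with hF
  have hden : ∀ x ∈ Set.Ico (0:ℝ) 1, (1 + f x) ≠ 0 := fun x hx => by
    have := f_nonneg hx; positivity
  have hq : ContinuousOn (fun x => Real.arctan (f x / (1 + f x))) (Set.Ico (0:ℝ) 1) :=
    Real.continuous_arctan.comp_continuousOn
      (f_continuousOn.div (continuousOn_const.add f_continuousOn) hden)
  intro x hx
  rcases eq_or_lt_of_le hx.1 with h | h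
  · -- x = 0
    subst h
    have hF0 : F 0 = 0 := by simp [hF, f_zero]
    unfold ContinuousWithinAt
    rw [hF0, ← Set.Ioo_insert_left (zero_lt_one), nhdsWithin_insert, Filter.tendsto_sup]
    constructor
    · rw [Filter.tendsto_pure_left]
      intro s hs
      simpa [hF0] using mem_of_mem_nhds hs
    · apply tendsto_of_tendsto_of_tendsto_of_le_of_le' tendsto_const_nhds slope_tendsto
      · filter_upwards [self_mem_nhdsWithin] with y hy
        exact (key_bounds ⟨hy.1.le, hy.2⟩).1
      · filter_upwards [self_mem_nhdsWithin] with y hy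
        exact (key_bounds ⟨hy.1.le, hy.2⟩).2
  · -- x > 0
    exact (hq x hx).mul
      ((continuousAt_const.div continuousAt_id (ne_of_gt h)).continuousWithinAt)

/-- The integrand `arctan(f(x)/(1+f(x)))·(1/x)` (which takes the value `0` at `x = 0`,
since `f 0 = 0` and, in Lean, `1/0 = 0`) is continuous and bounded on `[0,1)`;
in particular it is integrable on `(0,1)`. -/
theorem integrand_continuousOn_bounded_integrable :
    ContinuousOn (fun x : ℝ => Real.arctan (f x / (1 + f x)) * (1/x)) (Set.Ico (0:ℝ) 1) ∧
    (∃ M : ℝ, ∀ x ∈ Set.Ico (0:ℝ) 1, |Real.arctan (f x / (1 + f x)) * (1/x)| ≤ M) ∧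
    IntervalIntegrable (fun x : ℝ => Real.arctan (f x / (1 + f x)) * (1/x))
      MeasureTheory.volume 0 1 := by
  set F : ℝ → ℝ := fun x => Real.arctan (f x / (1 + f x)) * (1/x) with hF
  have hcont := main_continuousOn
  -- boundedness
  have hbdd : ∃ M : ℝ, ∀ x ∈ Set.Ico (0:ℝ) 1, |F x| ≤ M := by
    obtain ⟨C, hC⟩ := (isCompact_Icc (a := (0:ℝ)) (b := 1/2)).exists_bound_of_continuousOn
      (hcont.mono (fun y hy => ⟨hy.1, by linarith [hy.2]⟩))
    refine ⟨max C Real.pi, fun x hx => ?_⟩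
    rcases le_or_gt x (1/2) with h | h
    · have := hC x ⟨hx.1, h⟩
      rw [Real.norm_eq_abs] at this
      exact le_trans this (le_max_left _ _)
    · have hx2 : (0:ℝ) < x := by linarith
      have h1 : |Real.arctan (f x / (1 + f x))| ≤ Real.pi / 2 := by
        have := Real.arctan_mem_Ioo (f x / (1 + f x))
        rw [abs_le]; exact ⟨this.1.le, this.2.le⟩
      have h2 : |1/x| ≤ 2 := by
        rw [abs_of_nonneg (by positivity)]
        rw [div_le_iff₀ hx2]; linarith
      calc |F x| = |Real.arctan (f x / (1 + f x))| * |1/x| := abs_mul _ _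
        _ ≤ (Real.pi / 2) * 2 := by
            apply mul_le_mul h1 h2 (abs_nonneg _) (by positivity)
        _ = Real.pi := by ring
        _ ≤ max C Real.pi := le_max_right _ _
  refine ⟨hcont, hbdd, ?_⟩
  obtain ⟨M, hM⟩ := hbdd
  rw [intervalIntegrable_iff_integrableOn_Ioo_of_le zero_le_one]
  have hmeas : Measurable F := by
    apply Measurable.mul
    · exact Real.continuous_arctan.measurable.comp
        (f_measurable.div (measurable_const.add f_measurable))
    · exact measurable_const.div measurable_id
  apply MeasureTheory.Measure.integrableOn_of_bounded (M := M)
  · simp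
  · exact hmeas.aestronglyMeasurable
  · rw [MeasureTheory.ae_restrict_iff' measurableSet_Ioo]
    exact MeasureTheory.ae_of_all _ fun x hx => by
      simpa [Real.norm_eq_abs] using hM x ⟨hx.1.le, hx.2⟩
end

section
/- ∫₀¹ Log(1 + (1+i)·F(x))·(1/x) dx − i·∫₀¹ Log(1 + (1+i)·F(ix))·(1/(ix))·i dx = 2i·∫₀¹ Im Log(1 + (1+i)·F(x))·(1/x) dx; equivalently, ∫₀¹ G(x) dx − ∫_{[0,i]} G(z) dz = 2iI, where G(z) := (1/z)·Log(1 + (1+i)·F(z)), F(z) := (1/(2π))·(Log((1+z)/(1−z)) + i·Log((1+iz)/(1−iz))), and I := ∫₀¹ arctan((artanh x − arctan x)/(π + artanh x − arctan x))·(1/x) dx. -/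
open Complex

/-- `F(z) = (1/(2π))·(Log((1+z)/(1−z)) + i·Log((1+iz)/(1−iz)))`. -/
noncomputable def F (z : ℂ) : ℂ :=
  (1 / (2 * (Real.pi : ℂ))) *
    (Complex.log ((1 + z) / (1 - z)) + Complex.I * Complex.log ((1 + Complex.I * z) / (1 - Complex.I * z)))

/-- `G(z) = (1/z)·Log(1 + (1+i)·F(z))`. -/
noncomputable def G (z : ℂ) : ℂ := (1 / z) * Complex.log (1 + (1 + Complex.I) * F z)

namespace SegAux

/-- The real value of `F` on `(0,1)`. -/
noncomputable def ff (x : ℝ) : ℝ := (artanh x - Real.arctan x) / Real.pi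

/-- The integrand on the real segment. -/
noncomputable def A (x : ℝ) : ℂ :=
  Complex.log (1 + (1 + I) * ((ff x : ℝ) : ℂ)) * (1 / (x : ℂ))

lemma arctan_nonneg {x : ℝ} (hx : 0 ≤ x) : 0 ≤ Real.arctan x := by
  have := Real.arctan_strictMono.monotone hx
  rwa [Real.arctan_zero] at this

lemma arctan_le_self {x : ℝ} (hx : 0 ≤ x) : Real.arctan x ≤ x := by
  rcases eq_or_lt_of_le hx with h | h
  · simp [← h]
  · have h1 : 0 < Real.arctan x := by
      have := Real.arctan_strictMono h
      rwa [Real.arctan_zero] at this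
    have h2 := Real.arctan_lt_pi_div_two x
    have h3 := Real.lt_tan h1 h2
    rw [Real.tan_arctan] at h3
    linarith

lemma artanh_nonneg {x : ℝ} (h0 : 0 ≤ x) (h1 : x < 1) : 0 ≤ artanh x := by
  have h : (1:ℝ) ≤ (1 + x) / (1 - x) := by
    rw [le_div_iff₀ (by linarith)]; linarith
  have := Real.log_nonneg h
  unfold artanh; linarith

lemma neg_log_le {y : ℝ} (hy : 0 < y) : -Real.log y ≤ 1 / y - 1 := by
  have h := Real.log_le_sub_one_of_pos (x := 1 / y) (by positivity)
  rw [one_div, Real.log_inv] at h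
  rw [one_div]
  linarith

lemma artanh_eq {x : ℝ} (h0 : 0 ≤ x) (h1 : x < 1) :
    artanh x = (1/2) * (Real.log (1 + x) - Real.log (1 - x)) := by
  unfold artanh
  rw [Real.log_div (by linarith) (by linarith)]

lemma artanh_le_small {x : ℝ} (h0 : 0 < x) (h1 : x ≤ 1/4) : artanh x ≤ 3/2 * x := by
  have hlog1 : Real.log (1 + x) ≤ x := by
    have := Real.log_le_sub_one_of_pos (x := 1 + x) (by linarith)
    linarith
  have hlog2 : -Real.log (1 - x) ≤ 2 * x := by
    have h := neg_log_le (y := 1 - x) (by linarith)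
    have h3 : 1 / (1 - x) ≤ 1 + 2 * x := by
      rw [div_le_iff₀ (by linarith)]
      nlinarith
    linarith
  rw [artanh_eq h0.le (by linarith)]
  linarith

lemma artanh_ub {x : ℝ} (h0 : 0 < x) (h1 : x < 1) :
    artanh x ≤ 1/2 + (1 - x) ^ (-(1/2) : ℝ) := by
  set s := Real.sqrt (1 - x) with hs
  have hspos : 0 < s := Real.sqrt_pos.mpr (by linarith)
  have hrw : (1 - x) ^ (-(1/2) : ℝ) = 1 / s := by
    rw [Real.rpow_neg (by linarith), hs, Real.sqrt_eq_rpow]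
    simp [one_div]
  have hlogs : Real.log s = Real.log (1 - x) / 2 := by
    rw [hs, Real.log_sqrt (by linarith)]
  have h2 : -Real.log (1 - x) ≤ 2 / s - 2 := by
    have := neg_log_le hspos
    have h3 : -Real.log (1 - x) = 2 * (-Real.log s) := by rw [hlogs]; ring
    rw [h3, one_div] at *
    have : -Real.log s ≤ s⁻¹ - 1 := this
    have h4 : (2:ℝ) / s = 2 * s⁻¹ := by rw [div_eq_mul_inv]
    rw [h4]; linarith
  have hlog1 : Real.log (1 + x) ≤ 1 := by
    have := Real.log_le_sub_one_of_pos (x := 1 + x) (by linarith)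
    linarith
  rw [artanh_eq h0.le h1, hrw]
  have : 1 / s = 2 / s / 2 := by ring
  rw [this]
  have h5 : (0:ℝ) < 2 / s := by positivity
  linarith

lemma ff_gt {x : ℝ} (h0 : 0 < x) (h1 : x < 1) : -(1/2) ≤ ff x := by
  have ha := artanh_nonneg h0.le h1
  have ht := Real.arctan_lt_pi_div_two x
  have hpi := Real.pi_pos
  unfold ff
  rw [le_div_iff₀ hpi]
  nlinarith

lemma ff_abs_le {x : ℝ} (h0 : 0 < x) (h1 : x < 1) : |ff x| ≤ artanh x + 1/2 := by
  have ha := artanh_nonneg h0.le h1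
  have ht := Real.arctan_lt_pi_div_two x
  have ht0 := arctan_nonneg h0.le
  have hpi := Real.pi_pos
  have hpi1 : (1:ℝ) ≤ Real.pi := by linarith [Real.pi_gt_three]
  unfold ff
  rw [abs_div, abs_of_pos hpi, div_le_iff₀ hpi, abs_le]
  constructor <;> nlinarith

end SegAux

namespace SegAux2
open SegAux

lemma w_re (t : ℝ) : (1 + (1 + I) * ((t:ℝ):ℂ)).re = 1 + t := by
  simp [Complex.add_re, Complex.mul_re]

lemma w_im (t : ℝ) : (1 + (1 + I) * ((t:ℝ):ℂ)).im = t := by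
  simp [Complex.add_im, Complex.mul_im]

lemma logw_im {t : ℝ} (ht : -1 < t) :
    (Complex.log (1 + (1 + I) * ((t:ℝ):ℂ))).im = Real.arctan (t / (1 + t)) := by
  set w : ℂ := 1 + (1 + I) * ((t:ℝ):ℂ) with hw
  have hre : w.re = 1 + t := w_re t
  have him : w.im = t := w_im t
  have hrepos : 0 < w.re := by rw [hre]; linarith
  rw [Complex.log_im]
  have htan : Real.tan (Complex.arg w) = t / (1 + t) := by
    rw [Complex.tan_arg, hre, him]
  have hmem : Complex.arg w ∈ Set.Ioo (-(Real.pi / 2)) (Real.pi / 2) := by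
    have := Complex.abs_arg_lt_pi_div_two_iff.mpr (Or.inl hrepos)
    rw [abs_lt] at this
    exact ⟨this.1, this.2⟩
  exact (Real.arctan_eq_of_tan_eq htan hmem).symm

lemma logw_conj {t : ℝ} (ht : -1 < t) :
    Complex.log (1 + (1 - I) * ((t:ℝ):ℂ))
      = (starRingEnd ℂ) (Complex.log (1 + (1 + I) * ((t:ℝ):ℂ))) := by
  have h1 : (1 + (1 - I) * ((t:ℝ):ℂ)) = (starRingEnd ℂ) (1 + (1 + I) * ((t:ℝ):ℂ)) := by
    simp only [map_add, map_mul, map_one, Complex.conj_I, Complex.conj_ofReal]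
    ring
  rw [h1, Complex.log_conj]
  intro h
  rw [Complex.arg_eq_pi_iff, w_re] at h
  linarith [h.1]

lemma norm_logw_le {t : ℝ} (ht : -(1/2) ≤ t) :
    ‖Complex.log (1 + (1 + I) * ((t:ℝ):ℂ))‖ ≤ 2 + 2 * |t| + Real.pi := by
  set w : ℂ := 1 + (1 + I) * ((t:ℝ):ℂ) with hw
  have habs_ge : (1/2 : ℝ) ≤ ‖w‖ := by
    have := Complex.re_le_norm w
    rw [w_re] at this; linarith
  have habs_le : ‖w‖ ≤ 1 + 2 * |t| := by
    calc ‖w‖ ≤ ‖(1:ℂ)‖ + ‖(1 + I) * ((t:ℝ):ℂ)‖ :=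
          norm_add_le _ _
    _ ≤ 1 + 2 * |t| := by
        rw [norm_mul, Complex.norm_real, Real.norm_eq_abs, norm_one]
        have h1I : ‖(1:ℂ) + I‖ ≤ 2 := by
          calc ‖(1:ℂ) + I‖ ≤ ‖(1:ℂ)‖ + ‖I‖ := norm_add_le _ _
          _ = 2 := by simp; norm_num
        nlinarith [abs_nonneg t, norm_nonneg ((1:ℂ) + I)]
  have hlog_ub : Real.log ‖w‖ ≤ 2 * |t| := by
    calc Real.log ‖w‖ ≤ Real.log (1 + 2 * |t|) :=
          Real.log_le_log (by linarith) habs_le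
    _ ≤ (1 + 2 * |t|) - 1 := Real.log_le_sub_one_of_pos (by positivity)
    _ = 2 * |t| := by ring
  have hlog_lb : -1 ≤ Real.log ‖w‖ := by
    have h2 : Real.log (1/2 : ℝ) ≤ Real.log ‖w‖ :=
      Real.log_le_log (by norm_num) habs_ge
    have h3 : Real.log (1/2 : ℝ) = - Real.log 2 := by
      rw [one_div, Real.log_inv]
    have h4 : Real.log 2 ≤ 1 := by
      have := Real.log_le_sub_one_of_pos (x := 2) (by norm_num); linarith
    linarith
  calc ‖Complex.log w‖ ≤ |(Complex.log w).re| + |(Complex.log w).im| :=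
        Complex.norm_le_abs_re_add_abs_im _
  _ ≤ 2 + 2 * |t| + Real.pi := by
      rw [Complex.log_re, Complex.log_im]
      have harg := Complex.abs_arg_le_pi w
      have : |Real.log ‖w‖| ≤ 2 + 2 * |t| := by
        rw [abs_le]; constructor <;> [linarith; linarith]
      linarith [abs_nonneg (Complex.arg w)]

lemma measurable_ff : Measurable ff := by
  have h1 : Measurable artanh := by
    unfold artanh
    exact measurable_const.mul (Real.measurable_log.comp
      ((measurable_const.add measurable_id).div (measurable_const.sub measurable_id)))
  unfold ff
  exact (h1.sub Real.measurable_arctan).div_const _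

lemma measurable_A : Measurable A := by
  unfold A
  apply Measurable.mul
  · exact Complex.measurable_log.comp
      (measurable_const.add ((Complex.measurable_ofReal.comp measurable_ff).const_mul _))
  · exact measurable_const.div Complex.measurable_ofReal

lemma intA1 : IntervalIntegrable A MeasureTheory.volume 0 (1/4) := by
  apply IntervalIntegrable.mono_fun' (g := fun _ => (3:ℝ))
    intervalIntegrable_const
    (measurable_A.aestronglyMeasurable)
  filter_upwards [MeasureTheory.ae_restrict_mem measurableSet_uIoc] with x hx
  rw [Set.uIoc_of_le (by norm_num : (0:ℝ) ≤ 1/4)] at hx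
  obtain ⟨h0, h1⟩ := hx
  have h1' : x < 1 := by linarith
  have hat := artanh_le_small h0 h1
  have hat0 := artanh_nonneg h0.le h1'
  have hart := arctan_le_self h0.le
  have hart0 := arctan_nonneg h0.le
  have hpi3 := Real.pi_gt_three
  have hff : |ff x| ≤ x / 2 := by
    unfold ff
    rw [abs_div, abs_of_pos Real.pi_pos, div_le_iff₀ Real.pi_pos, abs_le]
    constructor <;> nlinarith
  have hz : ‖(1 + I) * ((ff x : ℝ):ℂ)‖ ≤ 1/2 := by
    rw [norm_mul, Complex.norm_real]
    have h1I : ‖(1:ℂ) + I‖ ≤ 2 := by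
      calc ‖(1:ℂ) + I‖ ≤ ‖(1:ℂ)‖ + ‖I‖ := norm_add_le _ _
      _ = 2 := by simp; norm_num
    calc ‖(1:ℂ) + I‖ * |ff x| ≤ 2 * (x/2) := by
          apply mul_le_mul h1I hff (abs_nonneg _) (by norm_num)
    _ ≤ 1/2 := by linarith
  have hlog : ‖Complex.log (1 + (1 + I) * ((ff x : ℝ):ℂ))‖ ≤ 3/2 * (x) := by
    calc ‖Complex.log (1 + (1 + I) * ((ff x : ℝ):ℂ))‖
        ≤ 3/2 * ‖(1 + I) * ((ff x : ℝ):ℂ)‖ := Complex.norm_log_one_add_half_le_self hz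
    _ ≤ 3/2 * x := by
        rw [norm_mul, Complex.norm_real, Real.norm_eq_abs]
        have h1I : ‖(1:ℂ) + I‖ ≤ 2 := by
          calc ‖(1:ℂ) + I‖ ≤ ‖(1:ℂ)‖ + ‖I‖ := norm_add_le _ _
          _ = 2 := by simp; norm_num
        have := mul_le_mul h1I hff (abs_nonneg _) (by norm_num : (0:ℝ) ≤ 2)
        nlinarith
  have hxinv : ‖(1 : ℂ) / (x:ℂ)‖ = 1 / x := by
    rw [norm_div, Complex.norm_real, norm_one, Real.norm_eq_abs, abs_of_pos h0]
  unfold A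
  rw [norm_mul, hxinv]
  calc ‖Complex.log (1 + (1 + I) * ((ff x : ℝ):ℂ))‖ * (1/x) ≤ (3/2 * x) * (1/x) := by
        apply mul_le_mul_of_nonneg_right hlog (by positivity)
  _ = 3/2 := by field_simp
  _ ≤ 3 := by norm_num

lemma intA2 : IntervalIntegrable A MeasureTheory.volume (1/4) 1 := by
  have hg : IntervalIntegrable (fun x : ℝ => 40 + 40 * (1 - x) ^ (-(1/2) : ℝ))
      MeasureTheory.volume (1/4) 1 := by
    have h := (intervalIntegral.intervalIntegrable_rpow' (a := 0) (b := 3/4)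
      (r := -(1/2)) (by norm_num)).comp_sub_left 1
    norm_num at h
    exact (intervalIntegrable_const (c := (40:ℝ))).add (h.symm.const_mul 40)
  apply IntervalIntegrable.mono_fun' hg (measurable_A.aestronglyMeasurable)
  have hne1 : ∀ᵐ (x : ℝ) ∂(MeasureTheory.volume.restrict (Set.uIoc (1/4 : ℝ) 1)), x ≠ 1 := by
    have hae : ∀ᵐ (x : ℝ) ∂(MeasureTheory.volume : MeasureTheory.Measure ℝ), x ≠ 1 := by
      rw [MeasureTheory.ae_iff]
      have : {x : ℝ | ¬ x ≠ 1} = {1} := by ext y; simp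
      rw [this]
      exact Real.volume_singleton
    exact MeasureTheory.ae_mono MeasureTheory.Measure.restrict_le_self hae
  filter_upwards [MeasureTheory.ae_restrict_mem measurableSet_uIoc, hne1] with x hx hne
  rw [Set.uIoc_of_le (by norm_num : (1/4:ℝ) ≤ 1)] at hx
  obtain ⟨h0, h1e⟩ := hx
  have h1 : x < 1 := lt_of_le_of_ne h1e hne
  have h0' : 0 < x := by linarith
  have hffl := ff_gt h0' h1
  have hffabs := ff_abs_le h0' h1
  have hat := artanh_ub h0' h1
  have hpi4 := Real.pi_le_four
  have hlog : ‖Complex.log (1 + (1 + I) * ((ff x : ℝ):ℂ))‖ ≤ 8 + 2 * (1 - x) ^ (-(1/2) : ℝ) := by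
    have := norm_logw_le hffl
    have h2 : 2 * |ff x| ≤ 2 * artanh x + 1 := by linarith
    have h3 : artanh x ≤ 1/2 + (1 - x) ^ (-(1/2) : ℝ) := hat
    linarith
  have hxinv : ‖(1 : ℂ) / (x:ℂ)‖ ≤ 4 := by
    rw [norm_div, Complex.norm_real, norm_one, Real.norm_eq_abs, abs_of_pos h0']
    rw [div_le_iff₀ h0']
    linarith
  have hrpow0 : (0:ℝ) ≤ (1 - x) ^ (-(1/2) : ℝ) := Real.rpow_nonneg (by linarith) _
  unfold A
  rw [norm_mul]
  calc ‖Complex.log (1 + (1 + I) * ((ff x : ℝ):ℂ))‖ * ‖(1 : ℂ) / (x:ℂ)‖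
      ≤ (8 + 2 * (1 - x) ^ (-(1/2) : ℝ)) * 4 := by
        apply mul_le_mul hlog hxinv (norm_nonneg _) (by linarith)
  _ ≤ 40 + 40 * (1 - x) ^ (-(1/2) : ℝ) := by nlinarith

lemma intA : IntervalIntegrable A MeasureTheory.volume 0 1 := by
  exact intA1.trans intA2

end SegAux2

namespace SegAux

lemma log_I_fac (x : ℝ) :
    Complex.log ((1 + Complex.I * (x:ℂ)) / (1 - Complex.I * (x:ℂ)))
      = 2 * (Real.arctan x : ℂ) * Complex.I := by
  have h := Complex.ofReal_arctan x
  rw [Complex.arctan] at h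
  have h2 : ((Real.arctan x : ℂ)) = -I / 2 * Complex.log ((1 + (x:ℂ) * I) / (1 - (x:ℂ) * I)) := h
  rw [mul_comm ((x:ℂ)) I] at h2
  rw [h2]; ring_nf; rw [Complex.I_sq]; ring

lemma log_real_fac {x : ℝ} (h0 : 0 ≤ x) (h1 : x < 1) :
    Complex.log ((1 + (x:ℂ)) / (1 - (x:ℂ))) = ((2 * artanh x : ℝ) : ℂ) := by
  have hcast : (1 + (x:ℂ)) / (1 - (x:ℂ)) = (((1 + x) / (1 - x) : ℝ) : ℂ) := by push_cast; ring
  have hpos : (0:ℝ) ≤ (1 + x) / (1 - x) := by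
    apply div_nonneg <;> linarith
  rw [hcast, ← Complex.ofReal_log hpos]
  norm_cast
  unfold artanh; ring

lemma hF {x : ℝ} (h0 : 0 < x) (h1 : x < 1) : F (x:ℂ) = ((ff x : ℝ) : ℂ) := by
  unfold F ff
  rw [log_real_fac h0.le h1, log_I_fac x]
  have hpi : (Real.pi : ℂ) ≠ 0 := by exact_mod_cast Real.pi_ne_zero
  push_cast
  field_simp
  ring_nf
  rw [Complex.I_sq]
  ring

lemma hFi {x : ℝ} (h0 : 0 < x) (h1 : x < 1) :
    F (Complex.I * (x:ℂ)) = -Complex.I * ((ff x : ℝ) : ℂ) := by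
  unfold F ff
  have h2 : (1 + Complex.I * (Complex.I * (x:ℂ))) / (1 - Complex.I * (Complex.I * (x:ℂ)))
      = (((1 - x) / (1 + x) : ℝ) : ℂ) := by
    have hI : Complex.I * (Complex.I * (x:ℂ)) = -(x:ℂ) := by
      rw [← mul_assoc, Complex.I_mul_I]; ring
    rw [hI]; push_cast; ring
  have h3 : Complex.log ((((1 - x) / (1 + x) : ℝ) : ℂ)) = ((- (2 * artanh x) : ℝ) : ℂ) := by
    have hpos : (0:ℝ) ≤ (1 - x) / (1 + x) := by
      apply div_nonneg <;> linarith
    rw [← Complex.ofReal_log hpos]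
    norm_cast
    have hinv : (1 - x) / (1 + x) = ((1 + x) / (1 - x))⁻¹ := by
      rw [inv_div]
    rw [hinv, Real.log_inv]
    unfold artanh; ring
  rw [h2, h3, log_I_fac x]
  have hpi : (Real.pi : ℂ) ≠ 0 := by exact_mod_cast Real.pi_ne_zero
  push_cast
  field_simp
  ring_nf

end SegAux


open MeasureTheory in
/-- `∫₀¹ Log(1 + (1+i)F(x))·(1/x) dx − ∫₀¹ Log(1 + (1+i)F(ix))·(1/(ix))·i dx
  = 2i·∫₀¹ Im Log(1 + (1+i)F(x))·(1/x) dx`;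
equivalently `∫₀¹ G(x) dx − ∫_{[0,i]} G(z) dz = 2iI`, the contour integral over `[0,i]`
being parametrized as `z = ix`, `0 ≤ x ≤ 1`, and
`I = ∫₀¹ arctan((artanh x − arctan x)/(π + artanh x − arctan x))·(1/x) dx`. -/
theorem segment_integrals_combine :
    ((∫ x in (0:ℝ)..1, Complex.log (1 + (1 + Complex.I) * F (x : ℂ)) * (1 / (x : ℂ)))
        - ∫ x in (0:ℝ)..1,
            Complex.log (1 + (1 + Complex.I) * F (Complex.I * (x : ℂ)))
              * (1 / (Complex.I * (x : ℂ))) * Complex.I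
      = 2 * Complex.I *
          ∫ x in (0:ℝ)..1,
            (((Complex.log (1 + (1 + Complex.I) * F (x : ℂ))).im : ℂ) * (1 / (x : ℂ)))) ∧
    ((∫ x in (0:ℝ)..1, G (x : ℂ)) - ∫ x in (0:ℝ)..1, G (Complex.I * (x : ℂ)) * Complex.I
      = 2 * Complex.I *
          ((∫ x in (0:ℝ)..1,
              Real.arctan ((artanh x - Real.arctan x) / (Real.pi + artanh x - Real.arctan x))
                * (1/x) : ℝ) : ℂ)) := by

  have key : ∀ x ∈ Set.Ioo (0:ℝ) 1, -1 < SegAux.ff x := fun x hx => by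
    have := SegAux.ff_gt hx.1 hx.2; linarith
  set L := ∫ x in (0:ℝ)..1, SegAux.A x with hL
  set r : ℝ → ℝ := fun x => Real.arctan (SegAux.ff x / (1 + SegAux.ff x)) * (1/x) with hr
  have ae_ne_one : ∀ᵐ (x:ℝ) ∂(volume : Measure ℝ), x ≠ 1 := by
    rw [MeasureTheory.ae_iff]
    have h : {x : ℝ | ¬ x ≠ 1} = {1} := by ext y; simp
    rw [h]; exact Real.volume_singleton
  have ae_Ioo : ∀ {p : ℝ → Prop}, (∀ x ∈ Set.Ioo (0:ℝ) 1, p x) →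
      (∀ᵐ (x:ℝ) ∂(volume : Measure ℝ), x ∈ Set.uIoc (0:ℝ) 1 → p x) := by
    intro p h
    filter_upwards [ae_ne_one] with x hx hmem
    rw [Set.uIoc_of_le zero_le_one] at hmem
    exact h x ⟨hmem.1, lt_of_le_of_ne hmem.2 hx⟩
  -- pointwise identities
  have e0 : ∀ c : ℂ, (1:ℂ) + (1 + I) * (-I * c) = 1 + (1 - I) * c := by
    intro c
    rw [show ((1:ℂ) + I) * (-I * c) = (-(I*I) - I) * c by ring, Complex.I_mul_I]
    ring
  have conjA : ∀ x ∈ Set.Ioo (0:ℝ) 1,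
      (starRingEnd ℂ) (SegAux.A x)
        = Complex.log (1 + (1 - I) * ((SegAux.ff x : ℝ):ℂ)) * (1 / (x:ℂ)) := by
    intro x hx
    unfold SegAux.A
    rw [map_mul, ← SegAux2.logw_conj (key x hx)]
    congr 1
    rw [map_div₀, map_one, Complex.conj_ofReal]
  have einv : ∀ x ∈ Set.Ioo (0:ℝ) 1, (1 / (Complex.I * (x:ℂ))) * Complex.I = 1 / (x:ℂ) := by
    intro x hx
    have hx0 : (x:ℂ) ≠ 0 := Complex.ofReal_ne_zero.mpr (ne_of_gt hx.1)
    field_simp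
  -- first integral
  have h1 : (∫ x in (0:ℝ)..1, Complex.log (1 + (1 + Complex.I) * F (x : ℂ)) * (1 / (x : ℂ))) = L := by
    apply intervalIntegral.integral_congr_ae
    apply ae_Ioo; intro x hx
    rw [SegAux.hF hx.1 hx.2]; rfl
  -- second integral
  have h2 : (∫ x in (0:ℝ)..1,
        Complex.log (1 + (1 + Complex.I) * F (Complex.I * (x : ℂ)))
          * (1 / (Complex.I * (x : ℂ))) * Complex.I)
      = ∫ x in (0:ℝ)..1, (starRingEnd ℂ) (SegAux.A x) := by
    apply intervalIntegral.integral_congr_ae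
    apply ae_Ioo; intro x hx
    rw [SegAux.hFi hx.1 hx.2, e0, conjA x hx, mul_assoc, einv x hx]
  have h2' : (∫ x in (0:ℝ)..1, (starRingEnd ℂ) (SegAux.A x)) = (starRingEnd ℂ) L := by
    rw [hL, intervalIntegral.integral_of_le zero_le_one,
      intervalIntegral.integral_of_le zero_le_one, ← integral_conj]
  -- imaginary part
  have himA : ∀ x ∈ Set.Ioo (0:ℝ) 1, (SegAux.A x).im = r x := by
    intro x hx
    unfold SegAux.A
    have hcast : (1 / (x:ℂ)) = (((1/x : ℝ)) : ℂ) := by push_cast; ring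
    rw [hcast]
    simp only [Complex.mul_im, Complex.ofReal_re, Complex.ofReal_im, mul_zero, zero_add,
      Complex.ofReal_mul]
    rw [SegAux2.logw_im (key x hx), hr]
  have hIm : L.im = ∫ x in (0:ℝ)..1, r x := by
    rw [hL, intervalIntegral.integral_of_le zero_le_one,
      intervalIntegral.integral_of_le zero_le_one]
    have him := integral_im (μ := (volume : Measure ℝ).restrict (Set.Ioc 0 1)) SegAux2.intA.1
    simp only [RCLike.im_to_complex] at him
    rw [← him]
    apply MeasureTheory.setIntegral_congr_ae measurableSet_Ioc
    filter_upwards [ae_ne_one] with x hx hmem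
    exact himA x ⟨hmem.1, lt_of_le_of_ne hmem.2 hx⟩
  have h3 : L - (starRingEnd ℂ) L = 2 * Complex.I * ((L.im : ℝ) : ℂ) := by
    rw [Complex.sub_conj]; push_cast; ring
  have h4 : (∫ x in (0:ℝ)..1,
        (((Complex.log (1 + (1 + Complex.I) * F (x : ℂ))).im : ℂ) * (1 / (x : ℂ))))
      = (((∫ x in (0:ℝ)..1, r x) : ℝ) : ℂ) := by
    rw [← intervalIntegral.integral_ofReal]
    apply intervalIntegral.integral_congr_ae
    apply ae_Ioo; intro x hx
    rw [SegAux.hF hx.1 hx.2, SegAux2.logw_im (key x hx), hr]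
    push_cast; ring
  constructor
  · rw [h1, h2, h2', h4, ← hIm, h3]
  · have g1 : (∫ x in (0:ℝ)..1, G (x : ℂ)) = L := by
      apply intervalIntegral.integral_congr_ae
      apply ae_Ioo; intro x hx
      unfold G
      rw [SegAux.hF hx.1 hx.2]
      unfold SegAux.A
      ring
    have g2 : (∫ x in (0:ℝ)..1, G (Complex.I * (x : ℂ)) * Complex.I)
        = ∫ x in (0:ℝ)..1, (starRingEnd ℂ) (SegAux.A x) := by
      apply intervalIntegral.integral_congr_ae
      apply ae_Ioo; intro x hx
      unfold G
      rw [SegAux.hFi hx.1 hx.2, conjA x hx, e0]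
      rw [mul_comm (1 / (Complex.I * (x:ℂ)))
        (Complex.log (1 + (1 - I) * ((SegAux.ff x : ℝ):ℂ))), mul_assoc, einv x hx]
    have g3 : (∫ x in (0:ℝ)..1,
          Real.arctan ((artanh x - Real.arctan x) / (Real.pi + artanh x - Real.arctan x))
            * (1/x)) = ∫ x in (0:ℝ)..1, r x := by
      apply intervalIntegral.integral_congr_ae
      apply ae_Ioo; intro x hx
      rw [hr]
      congr 1
      congr 1
      have hpi : Real.pi ≠ 0 := Real.pi_ne_zero
      have h1ff : 1 + SegAux.ff x = (Real.pi + artanh x - Real.arctan x) / Real.pi := by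
        unfold SegAux.ff
        field_simp
        ring
      have h2ff : SegAux.ff x = (artanh x - Real.arctan x) / Real.pi := rfl
      rw [h1ff, h2ff]
      rw [show (artanh x - Real.arctan x) / Real.pi = (artanh x - Real.arctan x) / Real.pi from rfl]
      rw [div_div_div_cancel_right₀ hpi]
    rw [g1, g2, h2', g3, ← hIm, h3]
end
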